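/- Let n ≥ 1 and let F, G, Σ₀ be n×n real matrices. Define Σ : ℝ → M_n(ℝ) by Σ(t) = exp(t·F)·Σ₀·exp(t·F)ᵀ + ∫₀ᵗ exp((t−s)·F)·G·Gᵀ·exp((t−s)·F)ᵀ ds. Then Σ(0) = Σ₀ and Σ is differentiable with Σ′(t) = F·Σ(t) + Σ(t)·Fᵀ + G·Gᵀ for every t ∈ ℝ. -/

import Mathlib

open Matrix Filter intervalIntegral

section LyapunovAux

variable {n : ℕ}

local notation "M" => Matrix (Fin n) (Fin n) ℝ

/-- The `(i, j)` entry of a matrix, as a linear map. -/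
def lyapunovEntryLM (i j : Fin n) : M →ₗ[ℝ] ℝ where
  toFun A := A i j
  map_add' _ _ := rfl
  map_smul' _ _ := rfl

section Linfty
attribute [local instance] Matrix.linftyOpNormedRing Matrix.linftyOpNormedAlgebra

theorem lyapunov_entry_hasDerivAt_exp (F : M) (t : ℝ) (i j : Fin n) :
    HasDerivAt (fun u : ℝ => NormedSpace.exp (u • F) i j)
      ((F * NormedSpace.exp (t • F)) i j) t := by
  have h := hasDerivAt_exp_smul_const' (𝕂 := ℝ) F t
  exact (LinearMap.toContinuousLinearMap (lyapunovEntryLM i j)).hasFDerivAt.comp_hasDerivAt t h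

end Linfty

section MainAux
attribute [local instance] Matrix.normedAddCommGroup Matrix.normedSpace

theorem lyapunov_hasDerivAt_exp (F : M) (t : ℝ) :
    HasDerivAt (fun u : ℝ => NormedSpace.exp (u • F))
      (F * NormedSpace.exp (t • F)) t :=
  hasDerivAt_pi.mpr fun i => hasDerivAt_pi.mpr fun j => lyapunov_entry_hasDerivAt_exp F t i j

/-- Matrix multiplication as a continuous bilinear map (elementwise sup norm). -/
noncomputable def lyapunovMulL : M →L[ℝ] M →L[ℝ] M :=
  LinearMap.toContinuousLinearMap
    ((LinearMap.toContinuousLinearMap (E := M) (F' := M)).toLinearMap ∘ₗ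
      (LinearMap.mul ℝ M))

@[simp] theorem lyapunovMulL_apply (A B : M) : lyapunovMulL A B = A * B := rfl

theorem HasDerivAt.matMul {f g : ℝ → M} {f' g' : M} {t : ℝ}
    (hf : HasDerivAt f f' t) (hg : HasDerivAt g g' t) :
    HasDerivAt (fun u => f u * g u) (f' * g t + f t * g') t := by
  have hfe : ∀ i k, HasDerivAt (fun u => f u i k) (f' i k) t :=
    fun i k => hasDerivAt_pi.mp (hasDerivAt_pi.mp hf i) k
  have hge : ∀ k j, HasDerivAt (fun u => g u k j) (g' k j) t :=
    fun k j => hasDerivAt_pi.mp (hasDerivAt_pi.mp hg k) j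
  refine hasDerivAt_pi.mpr fun i => hasDerivAt_pi.mpr fun j => ?_
  simp only [Matrix.mul_apply, Matrix.add_apply]
  rw [← Finset.sum_add_distrib]
  exact HasDerivAt.fun_sum fun k _ => (hfe i k).mul (hge k j)

/-- Matrix transpose as a linear map. -/
def lyapunovTransLM : M →ₗ[ℝ] M where
  toFun A := Aᵀ
  map_add' _ _ := rfl
  map_smul' _ _ := rfl

theorem HasDerivAt.matTranspose {f : ℝ → M} {f' : M} {t : ℝ}
    (hf : HasDerivAt f f' t) :
    HasDerivAt (fun u => (f u)ᵀ) f'ᵀ t :=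
  (LinearMap.toContinuousLinearMap lyapunovTransLM).hasFDerivAt.comp_hasDerivAt t hf

theorem lyapunov_exp_smul_add (F : M) (a b : ℝ) :
    NormedSpace.exp ((a + b) • F) =
      NormedSpace.exp (a • F) * NormedSpace.exp (b • F) := by
  rw [add_smul]
  exact Matrix.exp_add_of_commute _ _ ((Commute.refl F).smul_left a |>.smul_right b)

theorem lyapunov_exp_smul_mul_neg (F : M) (a : ℝ) :
    NormedSpace.exp (a • F) * NormedSpace.exp ((-a) • F) = 1 := by
  rw [← lyapunov_exp_smul_add, add_neg_cancel, zero_smul, NormedSpace.exp_zero]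

/-- `X ↦ A * X * B` as a continuous linear map. -/
noncomputable def lyapunovLrL (A B : M) : M →L[ℝ] M :=
  LinearMap.toContinuousLinearMap ((LinearMap.mulRight ℝ B).comp (LinearMap.mulLeft ℝ A))

@[simp] theorem lyapunovLrL_apply (A B X : M) : lyapunovLrL A B X = A * X * B := rfl

end MainAux

end LyapunovAux

attribute [local instance] Matrix.normedAddCommGroup Matrix.normedSpace

/-- For a linear SDE `dx = F x dt + G dw` with constant `n × n` coefficient
matrices `F` and `G` and initial covariance `Σ₀`, the covariance
`Σ(t) = exp(tF) Σ₀ exp(tF)ᵀ + ∫₀ᵗ exp((t−s)F) G Gᵀ exp((t−s)F)ᵀ ds`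
satisfies `Σ(0) = Σ₀` and the Lyapunov ODE
`Σ′(t) = F Σ(t) + Σ(t) Fᵀ + G Gᵀ` for every `t`. -/
theorem lyapunov_ode_covariance (n : ℕ) (hn : 1 ≤ n)
    (F G Sigma0 : Matrix (Fin n) (Fin n) ℝ) :
    let Sigma : ℝ → Matrix (Fin n) (Fin n) ℝ := fun t =>
      NormedSpace.exp (t • F) * Sigma0 * (NormedSpace.exp (t • F))ᵀ
        + ∫ s in (0 : ℝ)..t,
            NormedSpace.exp ((t - s) • F) * (G * Gᵀ)
              * (NormedSpace.exp ((t - s) • F))ᵀ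
    Sigma 0 = Sigma0
      ∧ ∀ t : ℝ, HasDerivAt Sigma (F * Sigma t + Sigma t * Fᵀ + G * Gᵀ) t := by
  intro Sigma
  set Φ : ℝ → Matrix (Fin n) (Fin n) ℝ := fun t => NormedSpace.exp (t • F) with hΦdef
  have hΦ : ∀ t, HasDerivAt Φ (F * Φ t) t := lyapunov_hasDerivAt_exp F
  set ψ : ℝ → Matrix (Fin n) (Fin n) ℝ := fun s => Φ (-s) * (G * Gᵀ) * (Φ (-s))ᵀ with hψdef
  have hΦneg : ∀ s : ℝ, HasDerivAt (fun u : ℝ => Φ (-u)) (-(F * Φ (-s))) s := by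
    intro s
    have h1 := (hΦ (-s)).scomp s (hasDerivAt_neg s)
    simp only [Function.comp_def, neg_one_smul] at h1
    exact h1
  have hψc : Continuous ψ := by
    rw [continuous_iff_continuousAt]
    intro s
    exact (((hΦneg s).matMul (hasDerivAt_const s (G * Gᵀ))).matMul
      (hΦneg s).matTranspose).continuousAt
  set K : ℝ → Matrix (Fin n) (Fin n) ℝ := fun t => Sigma0 + ∫ s in (0:ℝ)..t, ψ s with hKdef
  have hK : ∀ t, HasDerivAt K (ψ t) t := by
    intro t
    haveI : TopologicalSpace.PseudoMetrizableSpace (Matrix (Fin n) (Fin n) ℝ) :=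
      inferInstanceAs (TopologicalSpace.PseudoMetrizableSpace (Fin n → Fin n → ℝ))
    have h := intervalIntegral.integral_hasDerivAt_right (hψc.intervalIntegrable 0 t)
      (hψc.stronglyMeasurableAtFilter _ _) hψc.continuousAt
    exact h.const_add Sigma0
  have hone : ∀ t : ℝ, Φ t * Φ (-t) = 1 := by
    intro t
    have := lyapunov_exp_smul_mul_neg F t
    simpa [hΦdef] using this
  have hSigma_eq : ∀ t, Sigma t = Φ t * K t * (Φ t)ᵀ := by
    intro t
    have hpt : ∀ s : ℝ,
        NormedSpace.exp ((t - s) • F) * (G * Gᵀ) * (NormedSpace.exp ((t - s) • F))ᵀ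
          = lyapunovLrL (Φ t) ((Φ t)ᵀ) (ψ s) := by
      intro s
      have he : NormedSpace.exp ((t - s) • F) = Φ t * Φ (-s) := by
        rw [sub_eq_add_neg]
        exact lyapunov_exp_smul_add F t (-s)
      rw [he, lyapunovLrL_apply, hψdef]
      simp only [transpose_mul]
      noncomm_ring
    have hint : (∫ s in (0:ℝ)..t,
        NormedSpace.exp ((t - s) • F) * (G * Gᵀ) * (NormedSpace.exp ((t - s) • F))ᵀ)
          = lyapunovLrL (Φ t) ((Φ t)ᵀ) (∫ s in (0:ℝ)..t, ψ s) := by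
      rw [intervalIntegral.integral_congr (g := fun s => lyapunovLrL (Φ t) ((Φ t)ᵀ) (ψ s))
        (fun s _ => hpt s)]
      exact (lyapunovLrL (Φ t) ((Φ t)ᵀ)).intervalIntegral_comp_comm (hψc.intervalIntegrable 0 t)
    show Φ t * Sigma0 * (Φ t)ᵀ + _ = _
    rw [hint, lyapunovLrL_apply, hKdef]
    simp only [mul_add, add_mul]
  constructor
  · have h0 : Φ 0 = 1 := by
      simp [hΦdef, NormedSpace.exp_zero]
    show Φ 0 * Sigma0 * (Φ 0)ᵀ + _ = Sigma0
    rw [intervalIntegral.integral_same, h0]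
    simp
  · intro t
    have hfun : Sigma = fun u => Φ u * K u * (Φ u)ᵀ := funext hSigma_eq
    rw [hfun]
    have hD := ((hΦ t).matMul (hK t)).matMul ((hΦ t).matTranspose)
    convert hD using 1
    have hmid : Φ t * ψ t * (Φ t)ᵀ = G * Gᵀ := by
      have h2 : (Φ (-t))ᵀ * (Φ t)ᵀ = 1 := by
        rw [← transpose_mul, hone t, transpose_one]
      calc Φ t * ψ t * (Φ t)ᵀ
          = (Φ t * Φ (-t)) * (G * Gᵀ) * ((Φ (-t))ᵀ * (Φ t)ᵀ) := by
            rw [hψdef]; noncomm_ring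
        _ = G * Gᵀ := by rw [hone t, h2]; simp
    simp only [transpose_mul, add_mul, mul_add]
    rw [← hmid]
    noncomm_ring
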